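/- Consider the one-species case: for positive integers or reals f, f' ≥ 0 and d, d' ≥ 0 with (d = 0 ↔ f = 0) and (d' = 0 ↔ f' = 0), if x^f/(d + x^f) = x^{f'}/(d' + x^{f'}) for all x > 0, then f = f' and d = d'. -/

import Mathlib

/-- Single-species core of Proposition 3.11: equality of one-dimensional Hill
functions on the positive reals forces equality of exponents and dissociation
constants, under the normalization `d = 0 ↔ f = 0`. -/
theorem one_species_hill_determined
    (f f' d d' : ℝ) (hf : 0 ≤ f) (hf' : 0 ≤ f') (hd : 0 ≤ d) (hd' : 0 ≤ d')
    (hsupp : d = 0 ↔ f = 0) (hsupp' : d' = 0 ↔ f' = 0)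
    (heq : ∀ x : ℝ, 0 < x → x ^ f / (d + x ^ f) = x ^ f' / (d' + x ^ f')) :
    f = f' ∧ d = d' := by
  -- Key: cross-multiplied identity d' * x^f = d * x^f' for all x > 0
  have key : ∀ x : ℝ, 0 < x → d' * x ^ f = d * x ^ f' := by
    intro x hx
    have hxf : (0:ℝ) < x ^ f := Real.rpow_pos_of_pos hx f
    have hxf' : (0:ℝ) < x ^ f' := Real.rpow_pos_of_pos hx f'
    have h1 : (0:ℝ) < d + x ^ f := by linarith
    have h2 : (0:ℝ) < d' + x ^ f' := by linarith
    have := (div_eq_div_iff h1.ne' h2.ne').mp (heq x hx)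
    nlinarith [this]
  have hdd : d = d' := by
    have := key 1 one_pos
    simp [Real.one_rpow] at this
    linarith
  by_cases hf0 : f = 0
  · -- then d = 0, hence d' = 0, hence f' = 0
    have hd0 : d = 0 := hsupp.mpr hf0
    have hd'0 : d' = 0 := by linarith
    exact ⟨by rw [hf0, (hsupp'.mp hd'0)], hdd⟩
  · have hd0 : d ≠ 0 := fun h => hf0 (hsupp.mp h)
    have hdpos : 0 < d := lt_of_le_of_ne hd (Ne.symm hd0)
    have h2 := key 2 (by norm_num)
    rw [← hdd] at h2
    have hpow : (2:ℝ) ^ f = (2:ℝ) ^ f' := by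
      exact mul_left_cancel₀ hd0 h2
    have : f * Real.log 2 = f' * Real.log 2 := by
      have := congrArg Real.log hpow
      rwa [Real.log_rpow (by norm_num), Real.log_rpow (by norm_num)] at this
    have hlog : Real.log 2 ≠ 0 := by
      have : (1:ℝ) < 2 := one_lt_two
      exact ne_of_gt (Real.log_pos this)
    exact ⟨mul_right_cancel₀ hlog this, hdd⟩
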